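/- arXiv:2207.07544 — 2 statements merged into one kernel-verified Lean document; each statement's English description precedes it below -/
import Mathlib

section
/- Let P2 be a stochastic kernel on W given W×A and Q2 a stochastic kernel on Y given A×W, and define the stochastic kernel P on W×Y given W×A by P(B×C|w,a) := ∫_B Q2(C|a,w') P2(dw'|w,a) for Borel B ⊆ W and C ⊆ Y. If P2 is continuous in total variation (in (w,a)) and for each fixed w' ∈ W the map a ↦ Q2(·|a,w') is continuous in total variation, then P is semi-uniform Feller. -/
open MeasureTheory ProbabilityTheory Filter Topology ENNReal

namespace SUFaux

open ENNReal

lemma abs_toReal_sub_le_two {x y : ℝ≥0∞} (hx : x ≤ 1) (hy : y ≤ 1) :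
    |x.toReal - y.toReal| ≤ 2 := by
  have hx' : x.toReal ≤ 1 := by
    simpa using ENNReal.toReal_mono ENNReal.one_ne_top hx
  have hy' : y.toReal ≤ 1 := by
    simpa using ENNReal.toReal_mono ENNReal.one_ne_top hy
  have := ENNReal.toReal_nonneg (a := x)
  have := ENNReal.toReal_nonneg (a := y)
  rw [abs_sub_le_iff]
  constructor <;> linarith

lemma integrable_of_bounded {α : Type*} [MeasurableSpace α] {μ : Measure α}
    [IsFiniteMeasure μ] {g : α → ℝ} (hm : AEStronglyMeasurable g μ) {C : ℝ}
    (hb : ∀ x, |g x| ≤ C) : Integrable g μ :=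
  (integrable_const C).mono' hm (ae_of_all _ (by simpa [Real.norm_eq_abs] using hb))

/-- total-variation bound on difference of integrals of a bounded measurable function. -/
lemma abs_integral_sub_le_tv {α : Type*} [MeasurableSpace α]
    {μ ν : Measure α} [IsFiniteMeasure μ] [IsFiniteMeasure ν]
    {g : α → ℝ} (hg : Measurable g) {M D : ℝ} (hM : 0 ≤ M)
    (hgM : ∀ x, |g x| ≤ M)
    (hD : ∀ B : Set α, MeasurableSet B → |(μ B).toReal - (ν B).toReal| ≤ D) :
    |(∫ x, g x ∂μ) - ∫ x, g x ∂ν| ≤ 2 * M * D := by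
  set ρ : Measure α := μ + ν with hρ
  have hμρ : μ ≪ ρ := (Measure.le_add_right le_rfl).absolutelyContinuous
  have hνρ : ν ≪ ρ := (Measure.le_add_left le_rfl).absolutelyContinuous
  set t₁ : α → ℝ := fun x => (μ.rnDeriv ρ x).toReal with ht₁def
  set t₂ : α → ℝ := fun x => (ν.rnDeriv ρ x).toReal with ht₂def
  have ht₁ : Measurable t₁ := (Measure.measurable_rnDeriv _ _).ennreal_toReal
  have ht₂ : Measurable t₂ := (Measure.measurable_rnDeriv _ _).ennreal_toReal
  have hint₁ : Integrable t₁ ρ := Measure.integrable_toReal_rnDeriv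
  have hint₂ : Integrable t₂ ρ := Measure.integrable_toReal_rnDeriv
  have hI1 : Integrable (fun x => t₁ x * g x) ρ := by
    have := hint₁.bdd_mul (c := M) hg.aestronglyMeasurable (ae_of_all _ fun x => by
      simpa [Real.norm_eq_abs] using hgM x)
    simpa [mul_comm] using this
  have hI2 : Integrable (fun x => t₂ x * g x) ρ := by
    have := hint₂.bdd_mul (c := M) hg.aestronglyMeasurable (ae_of_all _ fun x => by
      simpa [Real.norm_eq_abs] using hgM x)
    simpa [mul_comm] using this
  have e1 : ∫ x, t₁ x * g x ∂ρ = ∫ x, g x ∂μ := by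
    simpa [smul_eq_mul] using integral_rnDeriv_smul (μ := μ) (ν := ρ) hμρ (f := g)
  have e2 : ∫ x, t₂ x * g x ∂ρ = ∫ x, g x ∂ν := by
    simpa [smul_eq_mul] using integral_rnDeriv_smul (μ := ν) (ν := ρ) hνρ (f := g)
  have hdiff : |(∫ x, g x ∂μ) - ∫ x, g x ∂ν| = |∫ x, (t₁ x - t₂ x) * g x ∂ρ| := by
    rw [← e1, ← e2, ← integral_sub hI1 hI2]
    simp [sub_mul]
  rw [hdiff]
  have habs2 : Integrable (fun x => |t₁ x - t₂ x|) ρ := by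
    simpa using (hint₁.sub hint₂).abs
  have habs : |∫ x, (t₁ x - t₂ x) * g x ∂ρ| ≤ ∫ x, |t₁ x - t₂ x| * M ∂ρ := by
    have h2 : Integrable (fun x => |(t₁ x - t₂ x) * g x|) ρ := by
      simpa [sub_mul] using (hI1.sub hI2).abs
    have step := integral_mono h2 (habs2.mul_const M) (fun x => by
      simp only [abs_mul]
      exact mul_le_mul_of_nonneg_left (hgM x) (abs_nonneg _))
    refine le_trans ?_ step
    have := norm_integral_le_integral_norm (μ := ρ) (fun x => (t₁ x - t₂ x) * g x)
    simp only [Real.norm_eq_abs] at this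
    exact this
  have hD0 : 0 ≤ D := le_trans (abs_nonneg _) (hD ∅ MeasurableSet.empty)
  set S : Set α := {x | t₂ x ≤ t₁ x} with hSdef
  have hS : MeasurableSet S := measurableSet_le ht₂ ht₁
  have hSint : ∫ x in S, (t₁ x - t₂ x) ∂ρ = (μ S).toReal - (ν S).toReal := by
    rw [integral_sub (hint₁.restrict) (hint₂.restrict),
      Measure.setIntegral_toReal_rnDeriv hμρ S, Measure.setIntegral_toReal_rnDeriv hνρ S]
    rfl
  have hScint : ∫ x in Sᶜ, (t₂ x - t₁ x) ∂ρ = (ν Sᶜ).toReal - (μ Sᶜ).toReal := by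
    rw [integral_sub (hint₂.restrict) (hint₁.restrict),
      Measure.setIntegral_toReal_rnDeriv hμρ Sᶜ, Measure.setIntegral_toReal_rnDeriv hνρ Sᶜ]
    rfl
  have htv : ∫ x, |t₁ x - t₂ x| ∂ρ ≤ 2 * D := by
    rw [← integral_add_compl hS habs2]
    have l1 : ∫ x in S, |t₁ x - t₂ x| ∂ρ = ∫ x in S, (t₁ x - t₂ x) ∂ρ := by
      refine setIntegral_congr_fun hS (fun x hx => ?_)
      exact abs_of_nonneg (sub_nonneg.2 hx)
    have l2 : ∫ x in Sᶜ, |t₁ x - t₂ x| ∂ρ = ∫ x in Sᶜ, (t₂ x - t₁ x) ∂ρ := by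
      refine setIntegral_congr_fun hS.compl (fun x hx => ?_)
      rw [abs_sub_comm]
      exact abs_of_nonneg (sub_nonneg.2 (le_of_lt (not_le.mp hx)))
    rw [l1, l2, hSint, hScint]
    have b1 : (μ S).toReal - (ν S).toReal ≤ D :=
      le_trans (le_abs_self _) (hD S hS)
    have b2 : (ν Sᶜ).toReal - (μ Sᶜ).toReal ≤ D := by
      refine le_trans ?_ (hD Sᶜ hS.compl)
      rw [abs_sub_comm]
      exact le_abs_self _
    linarith
  calc |∫ x, (t₁ x - t₂ x) * g x ∂ρ| ≤ ∫ x, |t₁ x - t₂ x| * M ∂ρ := habs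
    _ = M * ∫ x, |t₁ x - t₂ x| ∂ρ := by rw [integral_mul_const]; ring
    _ ≤ M * (2 * D) := mul_le_mul_of_nonneg_left htv hM
    _ = 2 * M * D := by ring

/-- Approximation of the difference of two finite measures at any Borel set by
finite unions from a fixed countable family of open sets. -/
lemma exists_basis_approx {β : Type*} [MetricSpace β] [TopologicalSpace.SeparableSpace β]
    [MeasurableSpace β] [BorelSpace β] [Nonempty β] :
    ∃ e : ℕ → Set β, (∀ n, MeasurableSet (e n)) ∧
      ∀ (μ ν : Measure β) [IsFiniteMeasure μ] [IsFiniteMeasure ν],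
        ∀ (B : Set β), MeasurableSet B → ∀ ε : ℝ, 0 < ε → ∃ K : Finset ℕ,
          |(μ B).toReal - (ν B).toReal| ≤
            |(μ (⋃ n ∈ K, e n)).toReal - (ν (⋃ n ∈ K, e n)).toReal| + ε := by
  classical
  haveI : SecondCountableTopology β := UniformSpace.secondCountable_of_separable β
  set b := TopologicalSpace.countableBasis β with hbdef
  have hb : TopologicalSpace.IsTopologicalBasis b :=
    TopologicalSpace.isBasis_countableBasis β
  have hbc : (insert (∅ : Set β) b).Countable :=
    (TopologicalSpace.countable_countableBasis β).insert ∅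
  obtain ⟨e, he⟩ := hbc.exists_eq_range ⟨∅, Set.mem_insert _ _⟩
  have heo : ∀ n, IsOpen (e n) := by
    intro n
    have hmem : e n ∈ insert (∅ : Set β) b := he ▸ Set.mem_range_self n
    rcases Set.mem_insert_iff.mp hmem with h | h
    · rw [h]; exact isOpen_empty
    · exact hb.isOpen h
  refine ⟨e, fun n => (heo n).measurableSet, ?_⟩
  intro μ ν hμfin hνfin B hB ε hε
  set ρ : Measure β := μ + ν with hρdef
  have hε4 : (0:ℝ) < ε / 4 := by linarith
  obtain ⟨U, hBU, hUo, hUlt⟩ := Set.exists_isOpen_lt_of_lt (μ := ρ) B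
    (ρ B + ENNReal.ofReal (ε/4))
    (ENNReal.lt_add_right (measure_ne_top ρ B) (by simp [ENNReal.ofReal_eq_zero]; linarith))
  have hρU : ρ U = μ U + ν U := by simp [hρdef]
  have hρB : ρ B = μ B + ν B := by simp [hρdef]
  have hμU : μ U < μ B + ENNReal.ofReal (ε/4) := by
    have h1 : μ U + ν B ≤ μ U + ν U := add_le_add_right (measure_mono hBU) _
    have h2 : μ U + ν B < (μ B + ENNReal.ofReal (ε/4)) + ν B := by
      calc μ U + ν B ≤ ρ U := by rw [hρU]; exact h1
        _ < ρ B + ENNReal.ofReal (ε/4) := hUlt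
        _ = (μ B + ENNReal.ofReal (ε/4)) + ν B := by rw [hρB]; ring
    exact (ENNReal.add_lt_add_iff_right (measure_ne_top ν B)).mp h2
  have hνU : ν U < ν B + ENNReal.ofReal (ε/4) := by
    have h1 : μ B + ν U ≤ μ U + ν U := add_le_add_left (measure_mono hBU) _
    have h2 : ν U + μ B < (ν B + ENNReal.ofReal (ε/4)) + μ B := by
      calc ν U + μ B ≤ ρ U := by rw [hρU]; rw [add_comm]; exact h1
        _ < ρ B + ENNReal.ofReal (ε/4) := hUlt
        _ = (ν B + ENNReal.ofReal (ε/4)) + μ B := by rw [hρB]; ring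
    exact (ENNReal.add_lt_add_iff_right (measure_ne_top μ B)).mp h2
  have hμUr : (μ U).toReal ≤ (μ B).toReal + ε/4 := by
    have := ENNReal.toReal_mono (by finiteness) hμU.le
    rwa [ENNReal.toReal_add (measure_ne_top μ B) ENNReal.ofReal_ne_top,
      ENNReal.toReal_ofReal hε4.le] at this
  have hνUr : (ν U).toReal ≤ (ν B).toReal + ε/4 := by
    have := ENNReal.toReal_mono (by finiteness) hνU.le
    rwa [ENNReal.toReal_add (measure_ne_top ν B) ENNReal.ofReal_ne_top,
      ENNReal.toReal_ofReal hε4.le] at this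
  have hμBr : (μ B).toReal ≤ (μ U).toReal :=
    ENNReal.toReal_mono (measure_ne_top μ U) (measure_mono hBU)
  have hνBr : (ν B).toReal ≤ (ν U).toReal :=
    ENNReal.toReal_mono (measure_ne_top ν U) (measure_mono hBU)
  set g : ℕ → Set β := fun n => if e n ⊆ U then e n else ∅ with hgdef
  have hgU : ∀ n, g n ⊆ U := by
    intro n
    by_cases h : e n ⊆ U
    · simpa [hgdef, h] using h
    · simp [hgdef, h]
  have hUeq : (⋃ n, g n) = U := by
    apply subset_antisymm (Set.iUnion_subset hgU)
    intro x hx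
    rw [hb.open_eq_sUnion' hUo] at hx
    obtain ⟨s, ⟨hsb, hsU⟩, hxs⟩ := hx
    have : s ∈ Set.range e := by rw [← he]; exact Set.mem_insert_of_mem _ hsb
    obtain ⟨n, rfl⟩ := this
    exact Set.mem_iUnion.2 ⟨n, by simp [hgdef, hsU, hxs]⟩
  have hconvμ : Tendsto (fun k => (μ (Set.accumulate g k)).toReal) atTop
      (𝓝 ((μ U).toReal)) := by
    have := (ENNReal.tendsto_toReal (measure_ne_top μ (⋃ n, g n))).comp
      (tendsto_measure_iUnion_accumulate (μ := μ) (f := g))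
    rwa [hUeq] at this
  have hconvν : Tendsto (fun k => (ν (Set.accumulate g k)).toReal) atTop
      (𝓝 ((ν U).toReal)) := by
    have := (ENNReal.tendsto_toReal (measure_ne_top ν (⋃ n, g n))).comp
      (tendsto_measure_iUnion_accumulate (μ := ν) (f := g))
    rwa [hUeq] at this
  have hev : ∀ᶠ k in atTop, (μ U).toReal - ε/4 < (μ (Set.accumulate g k)).toReal ∧
      (ν U).toReal - ε/4 < (ν (Set.accumulate g k)).toReal :=
    (hconvμ.eventually (eventually_gt_nhds (by linarith))).and
      (hconvν.eventually (eventually_gt_nhds (by linarith)))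
  obtain ⟨k, hk⟩ := hev.exists
  refine ⟨(Finset.range (k+1)).filter (fun n => e n ⊆ U), ?_⟩
  have hVeq : (⋃ n ∈ (Finset.range (k+1)).filter (fun n => e n ⊆ U), e n)
      = Set.accumulate g k := by
    ext x
    simp only [Set.mem_iUnion, Finset.mem_filter, Finset.mem_range, Nat.lt_succ_iff,
      Set.mem_accumulate]
    constructor
    · rintro ⟨n, ⟨hnk, hsub⟩, hx⟩
      exact ⟨n, hnk, by simp [hgdef, hsub, hx]⟩
    · rintro ⟨n, hnk, hx⟩
      by_cases h : e n ⊆ U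
      · exact ⟨n, ⟨hnk, h⟩, by simpa [hgdef, h] using hx⟩
      · simp [hgdef, h] at hx
  rw [hVeq]
  set V := Set.accumulate g k with hVdef
  have hVU : V ⊆ U := by rw [← hUeq]; exact Set.accumulate_subset_iUnion k
  have hμV1 : (μ V).toReal ≤ (μ U).toReal :=
    ENNReal.toReal_mono (measure_ne_top μ U) (measure_mono hVU)
  have hνV1 : (ν V).toReal ≤ (ν U).toReal :=
    ENNReal.toReal_mono (measure_ne_top ν U) (measure_mono hVU)
  obtain ⟨hkμ, hkν⟩ := hk
  have e1 : |(μ B).toReal - (μ V).toReal| ≤ ε/4 := by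
    rw [abs_sub_le_iff]; constructor <;> linarith
  have e2 : |(ν B).toReal - (ν V).toReal| ≤ ε/4 := by
    rw [abs_sub_le_iff]; constructor <;> linarith
  have key : (μ B).toReal - (ν B).toReal =
      ((μ V).toReal - (ν V).toReal) +
        (((μ B).toReal - (μ V).toReal) - ((ν B).toReal - (ν V).toReal)) := by ring
  calc |(μ B).toReal - (ν B).toReal|
      ≤ |(μ V).toReal - (ν V).toReal| +
        |((μ B).toReal - (μ V).toReal) - ((ν B).toReal - (ν V).toReal)| := by
        rw [key]; exact abs_add_le _ _
    _ ≤ |(μ V).toReal - (ν V).toReal| + (ε/4 + ε/4) := by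
        gcongr
        exact (abs_sub _ _).trans (add_le_add e1 e2)
    _ ≤ |(μ V).toReal - (ν V).toReal| + ε := by linarith

end SUFaux

/-- A stochastic kernel `Ψ` on `X × Y` given `T` is *semi-uniform Feller* if for every
sequence `t n → t` in `T` and every bounded continuous `f : X → ℝ`,
`sup_{B ∈ B(Y)} |∫ f dΨ(·, B | t n) − ∫ f dΨ(·, B | t)| → 0`, where `Ψ(A, B | t) = Ψ(A × B | t)`. -/
def SemiUniformFeller {X Y T : Type*} [TopologicalSpace X] [MeasurableSpace X]
    [MeasurableSpace Y] [TopologicalSpace T] [MeasurableSpace T]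
    (Ψ : Kernel T (X × Y)) : Prop :=
  ∀ (s : ℕ → T) (t : T), Tendsto s atTop (𝓝 t) → ∀ f : BoundedContinuousFunction X ℝ,
    Tendsto (fun n => ⨆ B : {B : Set Y // MeasurableSet B},
      |(∫ x in Set.univ ×ˢ B.1, f x.1 ∂(Ψ (s n))) - ∫ x in Set.univ ×ˢ B.1, f x.1 ∂(Ψ t)|)
      atTop (𝓝 0)

/-- For a `POMDP₂` with transition kernel `P(B × C | w, a) = ∫_B Q₂(C | a, w') P₂(dw' | w, a)`,
if `P₂` is continuous in total variation in `(w, a)` and, for each fixed `w'`, the map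
`a ↦ Q₂(· | a, w')` is continuous in total variation, then `P` is semi-uniform Feller. -/
theorem semiUniformFeller_pomdp2_tv_tv
    {W Y A : Type*}
    [MetricSpace W] [TopologicalSpace.SeparableSpace W] [MeasurableSpace W] [BorelSpace W]
    [StandardBorelSpace W] [Nonempty W]
    [MetricSpace Y] [TopologicalSpace.SeparableSpace Y] [MeasurableSpace Y] [BorelSpace Y]
    [StandardBorelSpace Y] [Nonempty Y]
    [MetricSpace A] [TopologicalSpace.SeparableSpace A] [MeasurableSpace A] [BorelSpace A]
    [StandardBorelSpace A] [Nonempty A]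
    (P2 : Kernel (W × A) W) [IsMarkovKernel P2]
    (Q2 : Kernel (A × W) Y) [IsMarkovKernel Q2]
    (P : Kernel (W × A) (W × Y)) [IsMarkovKernel P]
    (hP : ∀ (w : W) (a : A) (B : Set W) (C : Set Y), MeasurableSet B → MeasurableSet C →
      P (w, a) (B ×ˢ C) = ∫⁻ w' in B, Q2 (a, w') C ∂(P2 (w, a)))
    (hP2 : ∀ (p : ℕ → W × A) (p₀ : W × A), Tendsto p atTop (𝓝 p₀) →
      Tendsto (fun n => ⨆ B : {B : Set W // MeasurableSet B},
        |((P2 (p n)) B.1).toReal - ((P2 p₀) B.1).toReal|) atTop (𝓝 0))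
    (hQ2 : ∀ (w' : W) (a : ℕ → A) (a₀ : A), Tendsto a atTop (𝓝 a₀) →
      Tendsto (fun n => ⨆ C : {C : Set Y // MeasurableSet C},
        |((Q2 (a n, w')) C.1).toReal - ((Q2 (a₀, w')) C.1).toReal|) atTop (𝓝 0)) :
    SemiUniformFeller P := by
  classical
  intro s t hst f
  -- measurability of the density maps
  have measQ : ∀ (c : A) {S : Set Y}, MeasurableSet S →
      Measurable (fun w' : W => (Q2 (c, w') S).toReal) := fun c S hS =>
    ((Q2.measurable_coe hS).comp measurable_prodMk_left).ennreal_toReal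
  -- Key identity
  have key : ∀ (q : W × A) (B : Set Y), MeasurableSet B →
      ∫ x in Set.univ ×ˢ B, f x.1 ∂(P q)
        = ∫ w', (Q2 (q.2, w') B).toReal * f w' ∂(P2 q) := by
    rintro ⟨w, a⟩ B hB
    have hmap : ((P (w, a)).restrict (Set.univ ×ˢ B)).map Prod.fst
        = (P2 (w, a)).withDensity (fun w' => Q2 (a, w') B) := by
      ext A' hA'
      rw [Measure.map_apply measurable_fst hA', Measure.restrict_apply (measurable_fst hA'),
        withDensity_apply _ hA']
      have hset : Prod.fst ⁻¹' A' ∩ Set.univ ×ˢ B = A' ×ˢ B := by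
        ext x
        simp [Set.mem_prod, and_comm]
      rw [hset, hP w a A' B hA' hB]
    have h1 : ∫ x in Set.univ ×ˢ B, f x.1 ∂(P (w, a))
        = ∫ y, f y ∂(((P (w, a)).restrict (Set.univ ×ˢ B)).map Prod.fst) := by
      rw [integral_map measurable_fst.aemeasurable
        f.continuous.measurable.aestronglyMeasurable]
    rw [h1, hmap]
    set d : W → NNReal := fun w' => (Q2 (a, w') B).toNNReal with hddef
    have hd : Measurable d :=
      ((Q2.measurable_coe hB).comp measurable_prodMk_left).ennreal_toNNReal
    have hcoe : (fun w' => Q2 (a, w') B) = fun w' => ((d w' : ℝ≥0∞)) := by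
      funext w'
      exact (ENNReal.coe_toNNReal (measure_ne_top _ _)).symm
    rw [hcoe, integral_withDensity_eq_integral_smul hd]
    rfl
  -- the TV distances for P2
  set Dfun : ℕ → ℝ := fun n => ⨆ B' : {B : Set W // MeasurableSet B},
    |((P2 (s n)) B'.1).toReal - ((P2 t) B'.1).toReal| with hDdef
  have hDlim : Tendsto Dfun atTop (𝓝 0) := hP2 s t hst
  have bddD : ∀ n, BddAbove (Set.range fun B' : {B : Set W // MeasurableSet B} =>
      |((P2 (s n)) B'.1).toReal - ((P2 t) B'.1).toReal|) := by
    intro n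
    refine ⟨2, ?_⟩
    rintro x ⟨B', rfl⟩
    exact SUFaux.abs_toReal_sub_le_two prob_le_one prob_le_one
  have hD : ∀ n (B' : Set W), MeasurableSet B' →
      |((P2 (s n)) B').toReal - ((P2 t) B').toReal| ≤ Dfun n := by
    intro n B' hB'
    exact le_ciSup (bddD n) ⟨B', hB'⟩
  -- countable family of open sets in Y
  obtain ⟨e, he_meas, he_approx⟩ := SUFaux.exists_basis_approx (β := Y)
  set UU : Finset ℕ → Set Y := fun K => ⋃ i ∈ K, e i with hUUdef
  have hUUmeas : ∀ K, MeasurableSet (UU K) := fun K =>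
    K.measurableSet_biUnion (fun i _ => he_meas i)
  -- the dominating functions
  set E : ℕ → W → ℝ := fun n w' => ⨆ K : Finset ℕ,
    |(Q2 ((s n).2, w') (UU K)).toReal - (Q2 (t.2, w') (UU K)).toReal| with hEdef
  have bddE : ∀ n w', BddAbove (Set.range fun K : Finset ℕ =>
      |(Q2 ((s n).2, w') (UU K)).toReal - (Q2 (t.2, w') (UU K)).toReal|) := by
    intro n w'
    refine ⟨2, ?_⟩
    rintro x ⟨K, rfl⟩
    exact SUFaux.abs_toReal_sub_le_two prob_le_one prob_le_one
  have hE_nonneg : ∀ n w', 0 ≤ E n w' :=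
    fun n w' => Real.iSup_nonneg (fun K => abs_nonneg _)
  have hE_le_two : ∀ n w', E n w' ≤ 2 := by
    intro n w'
    refine Real.iSup_le (fun K => ?_) (by norm_num)
    exact SUFaux.abs_toReal_sub_le_two prob_le_one prob_le_one
  have hE_meas : ∀ n, Measurable (E n) := by
    intro n
    exact Measurable.iSup (fun K => ((measQ _ (hUUmeas K)).sub (measQ _ (hUUmeas K))).abs)
  have hE_int : ∀ n, Integrable (E n) (P2 t) := fun n =>
    SUFaux.integrable_of_bounded (hE_meas n).aestronglyMeasurable
      (fun w' => by rw [abs_of_nonneg (hE_nonneg n w')]; exact hE_le_two n w')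
  -- domination of set-differences by E
  have hdom : ∀ n (B : Set Y), MeasurableSet B → ∀ w',
      |(Q2 ((s n).2, w') B).toReal - (Q2 (t.2, w') B).toReal| ≤ E n w' := by
    intro n B hB w'
    refine le_of_forall_pos_le_add ?_
    intro ε hε
    obtain ⟨K, hK⟩ := he_approx (Q2 ((s n).2, w')) (Q2 (t.2, w')) B hB ε hε
    refine hK.trans (add_le_add_left ?_ ε)
    exact le_ciSup (bddE n w') K
  -- pointwise convergence of E to 0
  have hsnd : Tendsto (fun n => (s n).2) atTop (𝓝 t.2) :=
    (continuous_snd.tendsto t).comp hst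
  have hE_tendsto : ∀ w', Tendsto (fun n => E n w') atTop (𝓝 0) := by
    intro w'
    have hq := hQ2 w' (fun n => (s n).2) t.2 hsnd
    refine squeeze_zero (fun n => hE_nonneg n w') (fun n => ?_) hq
    refine Real.iSup_le (fun K => ?_) (Real.iSup_nonneg (fun C => abs_nonneg _))
    refine le_ciSup (f := fun C : {C : Set Y // MeasurableSet C} =>
      |((Q2 ((s n).2, w')) C.1).toReal - ((Q2 (t.2, w')) C.1).toReal|) ?_ ⟨UU K, hUUmeas K⟩
    refine ⟨2, ?_⟩
    rintro x ⟨C, rfl⟩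
    exact SUFaux.abs_toReal_sub_le_two prob_le_one prob_le_one
  -- convergence of ∫ E n
  have hEint_lim : Tendsto (fun n => ∫ w', E n w' ∂(P2 t)) atTop (𝓝 0) := by
    have := tendsto_integral_of_dominated_convergence (μ := P2 t)
      (F := E) (f := fun _ => (0:ℝ)) (bound := fun _ => 2)
      (fun n => (hE_meas n).aestronglyMeasurable)
      (integrable_const 2)
      (fun n => ae_of_all _ (fun w' => by
        rw [Real.norm_eq_abs, abs_of_nonneg (hE_nonneg n w')]; exact hE_le_two n w'))
      (ae_of_all _ (fun w' => hE_tendsto w'))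
    simpa using this
  -- per-B integrands
  have hg_meas : ∀ (c : A) {B : Set Y}, MeasurableSet B →
      Measurable (fun w' : W => (Q2 (c, w') B).toReal * f w') := fun c B hB =>
    (measQ c hB).mul f.continuous.measurable
  have hg_bound : ∀ (c : A) (B : Set Y) (w' : W),
      |(Q2 (c, w') B).toReal * f w'| ≤ ‖f‖ := by
    intro c B w'
    rw [abs_mul]
    have h1 : |(Q2 (c, w') B).toReal| ≤ 1 := by
      rw [abs_of_nonneg ENNReal.toReal_nonneg]
      simpa using ENNReal.toReal_mono ENNReal.one_ne_top (prob_le_one (μ := Q2 (c, w')) (s := B))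
    have h2 : |f w'| ≤ ‖f‖ := by
      rw [← Real.norm_eq_abs]; exact f.norm_coe_le_norm w'
    calc |(Q2 (c, w') B).toReal| * |f w'| ≤ 1 * ‖f‖ :=
      mul_le_mul h1 h2 (abs_nonneg _) zero_le_one
    _ = ‖f‖ := one_mul _
  have hg_int : ∀ (c : A) {B : Set Y}, MeasurableSet B →
      Integrable (fun w' : W => (Q2 (c, w') B).toReal * f w') (P2 t) := fun c B hB =>
    SUFaux.integrable_of_bounded (hg_meas c hB).aestronglyMeasurable (hg_bound c B)
  -- the master bound for each n and measurable B
  have master : ∀ n (B : Set Y), MeasurableSet B →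
      |(∫ x in Set.univ ×ˢ B, f x.1 ∂(P (s n))) - ∫ x in Set.univ ×ˢ B, f x.1 ∂(P t)|
        ≤ 2 * ‖f‖ * Dfun n + ‖f‖ * ∫ w', E n w' ∂(P2 t) := by
    intro n B hB
    rw [key (s n) B hB, key t B hB]
    set g1 : W → ℝ := fun w' => (Q2 ((s n).2, w') B).toReal * f w' with hg1
    set g2 : W → ℝ := fun w' => (Q2 (t.2, w') B).toReal * f w' with hg2
    have hsplit : (∫ w', g1 w' ∂(P2 (s n))) - ∫ w', g2 w' ∂(P2 t)
        = ((∫ w', g1 w' ∂(P2 (s n))) - ∫ w', g1 w' ∂(P2 t))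
          + ((∫ w', g1 w' ∂(P2 t)) - ∫ w', g2 w' ∂(P2 t)) := by ring
    rw [hsplit]
    refine (abs_add_le _ _).trans (add_le_add ?_ ?_)
    · -- TV part
      exact SUFaux.abs_integral_sub_le_tv (hg_meas _ hB) (norm_nonneg f)
        (hg_bound _ B) (hD n)
    · -- dominated part
      rw [← integral_sub (hg_int _ hB) (hg_int _ hB)]
      have step1 : |∫ w', (g1 w' - g2 w') ∂(P2 t)| ≤ ∫ w', |g1 w' - g2 w'| ∂(P2 t) := by
        have := norm_integral_le_integral_norm (μ := P2 t) (fun w' => g1 w' - g2 w')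
        simpa [Real.norm_eq_abs] using this
      refine step1.trans ?_
      have habs_int : Integrable (fun w' => |g1 w' - g2 w'|) (P2 t) :=
        (((hg_int _ hB).sub (hg_int _ hB)).abs)
      have step2 : ∫ w', |g1 w' - g2 w'| ∂(P2 t) ≤ ∫ w', E n w' * ‖f‖ ∂(P2 t) := by
        refine integral_mono habs_int ((hE_int n).mul_const ‖f‖) (fun w' => ?_)
        have : g1 w' - g2 w'
            = ((Q2 ((s n).2, w') B).toReal - (Q2 (t.2, w') B).toReal) * f w' := by
          simp [hg1, hg2]; ring
        rw [this, abs_mul]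
        refine mul_le_mul (hdom n B hB w') ?_ (abs_nonneg _) (hE_nonneg n w')
        rw [← Real.norm_eq_abs]; exact f.norm_coe_le_norm w'
      refine step2.trans ?_
      rw [integral_mul_const]
      rw [mul_comm]
  -- squeeze
  have hub : Tendsto (fun n => 2 * ‖f‖ * Dfun n + ‖f‖ * ∫ w', E n w' ∂(P2 t))
      atTop (𝓝 0) := by
    have h1 := hDlim.const_mul (2 * ‖f‖)
    have h2 := hEint_lim.const_mul ‖f‖
    simpa using h1.add h2
  haveI : Nonempty {B : Set Y // MeasurableSet B} := ⟨⟨∅, MeasurableSet.empty⟩⟩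
  refine tendsto_of_tendsto_of_tendsto_of_le_of_le tendsto_const_nhds hub ?_ ?_
  · intro n
    exact Real.iSup_nonneg (fun B => abs_nonneg _)
  · intro n
    refine Real.iSup_le (fun B => master n B.1 B.2) ?_
    have hDn : 0 ≤ Dfun n := Real.iSup_nonneg (fun B => abs_nonneg _)
    have hEn : 0 ≤ ∫ w', E n w' ∂(P2 t) :=
      integral_nonneg (fun w' => hE_nonneg n w')
    positivity
end

section
/- Let W = Y = A = ℝ, and for w ∈ ℝ write w₊ = max(w,0) and w₋ = min(w,0). Define P2(·|w,a) := δ_{w₊} (the Dirac measure at w₊) and Q2(·|w) := δ_{w₋}. Then: (1) P2 and Q2 are weakly continuous in w but neither is continuous in total variation at w = 0; and (2) the kernel P on ℝ×ℝ given ℝ×ℝ defined by P(B×C|w,a) := ∫_B Q2(C|w') P2(dw'|w,a) satisfies P(·|w,a) = δ_{(w₊, 0)}, i.e., P(B×C|w,a) = 1{w₊ ∈ B}·1{0 ∈ C}, and P is semi-uniform Feller: for every sequence w^(n) → w in ℝ and every bounded continuous f: ℝ → ℝ, sup_{C ∈ B(ℝ)} |∫ f(w') P(dw',C|w^(n),a^(n))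 − ∫ f(w') P(dw',C|w,a)| = sup_{C ∈ B(ℝ)} 1{0 ∈ C}·|f(w₊^(n)) − f(w₊)| → 0. -/
open MeasureTheory ProbabilityTheory Filter Topology

open Classical in
private lemma dirac_tv_ge_one {x : ℝ} (hx : x ≠ 0) :
    (1:ℝ) ≤ ⨆ C : {C : Set ℝ // MeasurableSet C},
      |((Measure.dirac x) C.1).toReal - ((Measure.dirac (0:ℝ)) C.1).toReal| := by
  have hbdd : BddAbove (Set.range fun C : {C : Set ℝ // MeasurableSet C} =>
      |((Measure.dirac x) C.1).toReal - ((Measure.dirac (0:ℝ)) C.1).toReal|) := by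
    refine ⟨2, ?_⟩
    rintro r ⟨C, rfl⟩
    have h1 : ((Measure.dirac x) C.1).toReal ≤ 1 := by
      simp [Measure.dirac_apply, Set.indicator]; split_ifs <;> norm_num
    have h2 : ((Measure.dirac (0:ℝ)) C.1).toReal ≤ 1 := by
      simp [Measure.dirac_apply, Set.indicator]; split_ifs <;> norm_num
    have h3 : 0 ≤ ((Measure.dirac x) C.1).toReal := ENNReal.toReal_nonneg
    have h4 : 0 ≤ ((Measure.dirac (0:ℝ)) C.1).toReal := ENNReal.toReal_nonneg
    rw [abs_le]; constructor <;> linarith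
  have hval : |((Measure.dirac x) ({0} : Set ℝ)).toReal -
      ((Measure.dirac (0:ℝ)) ({0} : Set ℝ)).toReal| = 1 := by
    simp [Measure.dirac_apply, Set.indicator, hx]
  calc (1:ℝ) = _ := hval.symm
    _ ≤ _ := le_ciSup hbdd ⟨({0} : Set ℝ), measurableSet_singleton 0⟩

private lemma not_tv (x : ℕ → ℝ) (hne : ∀ n, x n ≠ 0)
    (h : Tendsto (fun n => ⨆ C : {C : Set ℝ // MeasurableSet C},
      |((Measure.dirac (x n)) C.1).toReal - ((Measure.dirac (0:ℝ)) C.1).toReal|)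
      atTop (𝓝 0)) : False := by
  have : (1:ℝ) ≤ 0 :=
    ge_of_tendsto h (Eventually.of_forall fun n => dirac_tv_ge_one (hne n))
  linarith

open Classical in
private lemma dirac_set_integral (p : ℝ × ℝ) (B : Set ℝ) (hB : MeasurableSet B)
    (f : BoundedContinuousFunction ℝ ℝ) :
    (∫ x in Set.univ ×ˢ B, f x.1 ∂(Measure.dirac ((max p.1 0, (0 : ℝ))))) =
      if (0:ℝ) ∈ B then f (max p.1 0) else 0 := by
  rw [restrict_dirac' (MeasurableSet.univ.prod hB)]
  by_cases hm : (0:ℝ) ∈ B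
  · rw [if_pos (by simp [hm]), integral_dirac, if_pos hm]
  · rw [if_neg (by simp [hm]), if_neg hm]; simp

/-- Example: with `W = Y = A = ℝ`, `P₂(·|w,a) = δ_{w₊}` and `Q₂(·|w) = δ_{w₋}`, the kernels
`P₂` and `Q₂` are weakly continuous but not continuous in total variation at `w = 0`, the
kernel `P(B × C | w, a) = ∫_B Q₂(C | w') P₂(dw' | w, a)` equals `δ_{(w₊, 0)}`, and `P` is
semi-uniform Feller. -/
theorem semiUniformFeller_example_pomdp2 :
    -- (1a) `P₂` is weakly continuous in `w`
    (∀ (w : ℕ → ℝ) (w₀ : ℝ), Tendsto w atTop (𝓝 w₀) → ∀ f : BoundedContinuousFunction ℝ ℝ,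
      Tendsto (fun n => ∫ x, f x ∂(Measure.dirac (max (w n) 0))) atTop
        (𝓝 (∫ x, f x ∂(Measure.dirac (max w₀ 0))))) ∧
    -- (1b) `Q₂` is weakly continuous in `w`
    (∀ (w : ℕ → ℝ) (w₀ : ℝ), Tendsto w atTop (𝓝 w₀) → ∀ f : BoundedContinuousFunction ℝ ℝ,
      Tendsto (fun n => ∫ x, f x ∂(Measure.dirac (min (w n) 0))) atTop
        (𝓝 (∫ x, f x ∂(Measure.dirac (min w₀ 0))))) ∧
    -- (1c) `P₂` is not continuous in total variation at `w = 0`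
    ¬ (∀ (w : ℕ → ℝ), Tendsto w atTop (𝓝 0) →
      Tendsto (fun n => ⨆ C : {C : Set ℝ // MeasurableSet C},
        |((Measure.dirac (max (w n) 0)) C.1).toReal -
          ((Measure.dirac (max (0 : ℝ) 0)) C.1).toReal|) atTop (𝓝 0)) ∧
    -- (1d) `Q₂` is not continuous in total variation at `w = 0`
    ¬ (∀ (w : ℕ → ℝ), Tendsto w atTop (𝓝 0) →
      Tendsto (fun n => ⨆ C : {C : Set ℝ // MeasurableSet C},
        |((Measure.dirac (min (w n) 0)) C.1).toReal -
          ((Measure.dirac (min (0 : ℝ) 0)) C.1).toReal|) atTop (𝓝 0)) ∧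
    -- (2a) `P(B × C | w, a) = ∫_B Q₂(C | w') P₂(dw' | w, a)` equals `δ_{(w₊, 0)}(B × C)`,
    -- i.e. `1{w₊ ∈ B} · 1{0 ∈ C}`
    (∀ (w _a : ℝ) (B C : Set ℝ), MeasurableSet B → MeasurableSet C →
      (∫⁻ w' in B, (Measure.dirac (min w' 0)) C ∂(Measure.dirac (max w 0))) =
        (Measure.dirac ((max w 0, (0 : ℝ)))) (B ×ˢ C)) ∧
    -- (2b) the kernel `P(·|w,a) = δ_{(w₊, 0)}` is semi-uniform Feller
    SemiUniformFeller (Kernel.deterministic (fun p : ℝ × ℝ => (max p.1 0, (0 : ℝ)))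
      ((measurable_fst.max measurable_const).prodMk measurable_const)) := by
  refine ⟨?_, ?_, ?_, ?_, ?_, ?_⟩
  · -- (1a)
    intro w w₀ hw f
    simp only [integral_dirac]
    exact (f.continuous.tendsto _).comp (hw.max tendsto_const_nhds)
  · -- (1b)
    intro w w₀ hw f
    simp only [integral_dirac]
    exact (f.continuous.tendsto _).comp (hw.min tendsto_const_nhds)
  · -- (1c)
    intro h
    have htend : Tendsto (fun n : ℕ => 1 / ((n:ℝ) + 1)) atTop (𝓝 0) :=
      tendsto_one_div_add_atTop_nhds_zero_nat
    refine not_tv (fun n => max (1 / ((n:ℝ) + 1)) 0) (fun n => ?_) ?_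
    · have : (0:ℝ) < 1 / ((n:ℝ) + 1) := by positivity
      show max (1 / ((n:ℝ) + 1)) 0 ≠ 0
      rw [max_eq_left this.le]; exact this.ne'
    · have := h _ htend
      simpa using this
  · -- (1d)
    intro h
    have htend : Tendsto (fun n : ℕ => -(1 / ((n:ℝ) + 1))) atTop (𝓝 0) := by
      simpa using (tendsto_one_div_add_atTop_nhds_zero_nat : Tendsto (fun n : ℕ => 1 / ((n:ℝ) + 1)) atTop (𝓝 0)).neg
    refine not_tv (fun n => min (-(1 / ((n:ℝ) + 1))) 0) (fun n => ?_) ?_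
    · have : (0:ℝ) < 1 / ((n:ℝ) + 1) := by positivity
      show min (-(1 / ((n:ℝ) + 1))) 0 ≠ 0
      rw [min_eq_left (by linarith)]
      exact neg_ne_zero.mpr this.ne'
    · have := h _ htend
      simpa using this
  · -- (2a)
    intro w _a B C hB hC
    classical
    rw [restrict_dirac' hB]
    have hmin : min (max w 0) 0 = 0 := min_eq_right (le_max_right w 0)
    by_cases hmem : max w 0 ∈ B
    · rw [if_pos hmem, lintegral_dirac, hmin, Measure.dirac_apply, Measure.dirac_apply]
      by_cases hc : (0:ℝ) ∈ C
      · simp [Set.indicator, hmem, hc]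
      · simp [Set.indicator, hc, fun h : (max w 0, (0:ℝ)) ∈ B ×ˢ C => hc h.2]
    · rw [if_neg hmem, Measure.dirac_apply]
      simp [Set.indicator, hmem]
  · -- (2b)
    intro s t hst f
    classical
    simp only [SemiUniformFeller, Kernel.deterministic_apply]
    have hsup : ∀ n, (⨆ B : {B : Set ℝ // MeasurableSet B},
        |(∫ x in Set.univ ×ˢ B.1, f x.1 ∂(Measure.dirac ((max (s n).1 0, (0 : ℝ))))) -
         ∫ x in Set.univ ×ˢ B.1, f x.1 ∂(Measure.dirac ((max t.1 0, (0 : ℝ))))|) =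
        |f (max (s n).1 0) - f (max t.1 0)| := by
      intro n
      apply le_antisymm
      · refine ciSup_le fun B => ?_
        rw [dirac_set_integral _ _ B.2, dirac_set_integral _ _ B.2]
        split_ifs
        · exact le_rfl
        · simp [abs_nonneg]
      · have hbdd : BddAbove (Set.range fun B : {B : Set ℝ // MeasurableSet B} =>
            |(∫ x in Set.univ ×ˢ B.1, f x.1 ∂(Measure.dirac ((max (s n).1 0, (0 : ℝ))))) -
             ∫ x in Set.univ ×ˢ B.1, f x.1 ∂(Measure.dirac ((max t.1 0, (0 : ℝ))))|) := by
          refine ⟨|f (max (s n).1 0) - f (max t.1 0)|, ?_⟩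
          rintro r ⟨B, rfl⟩
          dsimp only
          rw [dirac_set_integral _ _ B.2, dirac_set_integral _ _ B.2]
          split_ifs
          · exact le_rfl
          · simp [abs_nonneg]
        have := le_ciSup hbdd (⟨Set.univ, MeasurableSet.univ⟩ : {B : Set ℝ // MeasurableSet B})
        rwa [dirac_set_integral _ _ MeasurableSet.univ,
          dirac_set_integral _ _ MeasurableSet.univ,
          if_pos (Set.mem_univ _), if_pos (Set.mem_univ _)] at this
    rw [tendsto_congr hsup]
    have hx : Tendsto (fun n => max (s n).1 0) atTop (𝓝 (max t.1 0)) :=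
      ((continuous_fst.tendsto t).comp hst).max tendsto_const_nhds
    have : Tendsto (fun n => |f (max (s n).1 0) - f (max t.1 0)|) atTop
        (𝓝 |f (max t.1 0) - f (max t.1 0)|) :=
      (((f.continuous.tendsto _).comp hx).sub tendsto_const_nhds).abs
    simpa using this
end
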